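/- arXiv:2510.20327 — 3 statements merged into one kernel-verified Lean document; each statement's English description precedes it below -/
import Mathlib

section
/- Let X, Y be random variables on finite sets with joint law p(x,y), and let q(y|x) be any conditional probability kernel with q(y|x) > 0 wherever needed. Define q(x,y) = p(x) q(y|x). If KL(p(x,y) ‖ q(x,y)) ≤ KL(p(x)p(y) ‖ q(x,y)), then the variational quantity I_vCLUB := E_{p(x,y)}[log q(y|x)] − E_{p(x)}E_{p(y)}[log q(y|x)] is an upper bound on the mutual information I(X;Y). -/
theorem stmt_7 {X Y : Type*} [Fintype X] [Fintype Y]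
    (p : X → Y → ℝ) (q : X → Y → ℝ)
    (hp : ∀ x y, 0 < p x y) (hpsum : ∑ x, ∑ y, p x y = 1)
    (hq : ∀ x y, 0 < q x y) (hqsum : ∀ x, ∑ y, q x y = 1)
    (hKL :
      (∑ x, ∑ y, p x y * Real.log (p x y / ((∑ y', p x y') * q x y))) ≤
      (∑ x, ∑ y, (∑ y', p x y') * (∑ x', p x' y) *
        Real.log ((∑ y', p x y') * (∑ x', p x' y) / ((∑ y', p x y') * q x y)))) :
    (∑ x, ∑ y, p x y * Real.log (p x y / ((∑ y', p x y') * (∑ x', p x' y)))) ≤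
    (∑ x, ∑ y, p x y * Real.log (q x y)) -
      (∑ x, ∑ y, (∑ y', p x y') * (∑ x', p x' y) * Real.log (q x y)) := by
  have hX : Nonempty X := by
    by_contra h; rw [not_nonempty_iff] at h
    simp at hpsum
  have hY : Nonempty Y := by
    by_contra h; rw [not_nonempty_iff] at h
    simp at hpsum
  have hpx : ∀ x, 0 < ∑ y', p x y' :=
    fun x => Finset.sum_pos (fun y _ => hp x y) Finset.univ_nonempty
  have hpy : ∀ y, 0 < ∑ x', p x' y :=
    fun y => Finset.sum_pos (fun x _ => hp x y) Finset.univ_nonempty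
  have e1 : ∀ x y, p x y * Real.log (p x y / ((∑ y', p x y') * q x y))
      = p x y * Real.log (p x y / ((∑ y', p x y') * (∑ x', p x' y)))
        + p x y * Real.log (∑ x', p x' y) - p x y * Real.log (q x y) := by
    intro x y
    rw [Real.log_div (hp x y).ne' (mul_pos (hpx x) (hq x y)).ne', Real.log_div (hp x y).ne' (mul_pos (hpx x) (hpy y)).ne',
        Real.log_mul (hpx x).ne' (hq x y).ne', Real.log_mul (hpx x).ne' (hpy y).ne']
    ring
  have e2 : ∀ x y, (∑ y', p x y') * (∑ x', p x' y) *
      Real.log ((∑ y', p x y') * (∑ x', p x' y) / ((∑ y', p x y') * q x y))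
      = (∑ y', p x y') * (∑ x', p x' y) * Real.log (∑ x', p x' y)
        - (∑ y', p x y') * (∑ x', p x' y) * Real.log (q x y) := by
    intro x y
    rw [Real.log_div (mul_pos (hpx x) (hpy y)).ne' (mul_pos (hpx x) (hq x y)).ne',
        Real.log_mul (hpx x).ne' (hq x y).ne', Real.log_mul (hpx x).ne' (hpy y).ne']
    ring
  have e3 : (∑ x, ∑ y, p x y * Real.log (∑ x', p x' y))
      = ∑ x, ∑ y, (∑ y', p x y') * (∑ x', p x' y) * Real.log (∑ x', p x' y) := by
    rw [Finset.sum_comm]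
    conv_rhs => rw [Finset.sum_comm]
    refine Finset.sum_congr rfl fun y _ => ?_
    rw [← Finset.sum_mul]
    have h1 : ∑ x, (∑ y', p x y') * (∑ x', p x' y) * Real.log (∑ x', p x' y)
        = (∑ x, ∑ y', p x y') * ((∑ x', p x' y) * Real.log (∑ x', p x' y)) := by
      rw [Finset.sum_mul]
      exact Finset.sum_congr rfl fun x _ => mul_assoc _ _ _
    rw [h1, hpsum, one_mul]
  simp only [e1, e2, Finset.sum_sub_distrib, Finset.sum_add_distrib] at hKL
  linarith [e3]
end

section
/- Let X, Y be random variables on finite sets, and let p(y|x) denote the true conditional distribution. Then the CLUB quantity I_CLUB := E_{p(x,y)}[log p(y|x)] − E_{p(x)}E_{p(y)}[log p(y|x)] satisfies I_CLUB ≥ I(X;Y), i.e., the contrastive log-ratio bound with the exact conditional is an upper bound on mutual information. -/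
theorem stmt_9 {X Y : Type*} [Fintype X] [Fintype Y]
    (p : X → Y → ℝ)
    (hp : ∀ x y, 0 < p x y) (hpsum : ∑ x, ∑ y, p x y = 1) :
    (∑ x, ∑ y, p x y * Real.log (p x y / ((∑ y', p x y') * (∑ x', p x' y)))) ≤
    (∑ x, ∑ y, p x y * Real.log (p x y / (∑ y', p x y'))) -
      (∑ x, ∑ y, (∑ y', p x y') * (∑ x', p x' y) *
        Real.log (p x y / (∑ y', p x y'))) := by
  rcases isEmpty_or_nonempty Y with hY | hY
  · simp at hpsum
  rcases isEmpty_or_nonempty X with hX | hX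
  · simp at hpsum
  set pX : X → ℝ := fun x => ∑ y', p x y' with hpXdef
  set pY : Y → ℝ := fun y => ∑ x', p x' y with hpYdef
  have hpX : ∀ x, 0 < pX x := fun x => Finset.sum_pos (fun y _ => hp x y) Finset.univ_nonempty
  have hpY : ∀ y, 0 < pY y := fun y => Finset.sum_pos (fun x _ => hp x y) Finset.univ_nonempty
  have hsumX : ∑ x, pX x = 1 := hpsum
  have hsumY : ∑ y, pY y = 1 := by
    simp only [hpYdef]; rw [Finset.sum_comm]; exact hpsum
  -- split the log in the LHS
  have hlog : ∀ x y, Real.log (p x y / (pX x * pY y))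
      = Real.log (p x y / pX x) - Real.log (pY y) := by
    intro x y
    rw [← div_div, Real.log_div (div_pos (hp x y) (hpX x)).ne' (hpY y).ne']
  have hLHS : (∑ x, ∑ y, p x y * Real.log (p x y / (pX x * pY y)))
      = (∑ x, ∑ y, p x y * Real.log (p x y / pX x))
        - ∑ x, ∑ y, p x y * Real.log (pY y) := by
    rw [← Finset.sum_sub_distrib]
    refine Finset.sum_congr rfl fun x _ => ?_
    rw [← Finset.sum_sub_distrib]
    refine Finset.sum_congr rfl fun y _ => ?_
    rw [hlog, mul_sub]
  have hplogY : (∑ x, ∑ y, p x y * Real.log (pY y)) = ∑ y, pY y * Real.log (pY y) := by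
    rw [Finset.sum_comm]
    refine Finset.sum_congr rfl fun y _ => ?_
    rw [hpYdef, Finset.sum_mul]
  rw [hLHS, hplogY]
  have key : (∑ x, ∑ y, pX x * pY y * Real.log (p x y / pX x))
      ≤ ∑ y, pY y * Real.log (pY y) := by
    have step : ∀ x, ∑ y, pY y * Real.log (p x y / pX x)
        ≤ ∑ y, pY y * Real.log (pY y) := by
      intro x
      rw [← sub_nonpos, ← Finset.sum_sub_distrib]
      calc ∑ y, (pY y * Real.log (p x y / pX x) - pY y * Real.log (pY y))
          ≤ ∑ y, (p x y / pX x - pY y) := by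
            refine Finset.sum_le_sum fun y _ => ?_
            have hq : (0:ℝ) < (p x y / pX x) / pY y :=
              div_pos (div_pos (hp x y) (hpX x)) (hpY y)
            have hle := Real.log_le_sub_one_of_pos hq
            rw [Real.log_div (div_pos (hp x y) (hpX x)).ne' (hpY y).ne'] at hle
            have h2 := mul_le_mul_of_nonneg_left hle (hpY y).le
            have h3 : pY y * ((p x y / pX x) / pY y - 1) = p x y / pX x - pY y := by
              rw [mul_sub, mul_one, mul_comm, div_mul_cancel₀ _ (hpY y).ne']
            rw [h3] at h2
            linarith [h2]
        _ = (∑ y, p x y) / pX x - ∑ y, pY y := by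
            rw [Finset.sum_sub_distrib, ← Finset.sum_div]
        _ ≤ 0 := by
            rw [hsumY]
            have : (∑ y, p x y) = pX x := rfl
            rw [this, div_self (hpX x).ne', sub_self]
    calc (∑ x, ∑ y, pX x * pY y * Real.log (p x y / pX x))
        = ∑ x, pX x * ∑ y, pY y * Real.log (p x y / pX x) := by
          refine Finset.sum_congr rfl fun x _ => ?_
          rw [Finset.mul_sum]
          exact Finset.sum_congr rfl fun y _ => (mul_assoc _ _ _)
      _ ≤ ∑ x, pX x * ∑ y, pY y * Real.log (pY y) := by
          refine Finset.sum_le_sum fun x _ => mul_le_mul_of_nonneg_left (step x) (hpX x).le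
      _ = (∑ x, pX x) * ∑ y, pY y * Real.log (pY y) := by rw [← Finset.sum_mul]
      _ = ∑ y, pY y * Real.log (pY y) := by rw [hsumX, one_mul]
  linarith
end

section
/- Let X, Y be random variables on finite sets with strictly positive joint distribution, and q(y|x) a strictly positive conditional kernel with q(x,y) := p(x)q(y|x). Then I_vCLUB(X;Y) − I(X;Y) = KL(p(x)p(y) ‖ q(x,y)) − KL(p(x,y) ‖ q(x,y)). In particular, I_vCLUB ≥ I(X;Y) if and only if KL(p(x,y) ‖ q(x,y)) ≤ KL(p(x)p(y) ‖ q(x,y)). -/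
open Finset

theorem stmt_15 {X Y : Type*} [Fintype X] [Fintype Y]
    (p : X → Y → ℝ) (q : X → Y → ℝ)
    (hp : ∀ x y, 0 < p x y) (hpsum : ∑ x, ∑ y, p x y = 1)
    (hq : ∀ x y, 0 < q x y) (hqsum : ∀ x, ∑ y, q x y = 1) :
    ((∑ x, ∑ y, p x y * Real.log (q x y)) -
      (∑ x, ∑ y, (∑ y', p x y') * (∑ x', p x' y) * Real.log (q x y))) -
    (∑ x, ∑ y, p x y * Real.log (p x y / ((∑ y', p x y') * (∑ x', p x' y)))) =
    (∑ x, ∑ y, (∑ y', p x y') * (∑ x', p x' y) *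
        Real.log ((∑ y', p x y') * (∑ x', p x' y) / ((∑ y', p x y') * q x y))) -
      (∑ x, ∑ y, p x y * Real.log (p x y / ((∑ y', p x y') * q x y))) := by
  have hYne : Nonempty Y := by
    by_contra h
    simp only [not_nonempty_iff] at h
    simp [Finset.univ_eq_empty] at hpsum
  have hXne : Nonempty X := by
    by_contra h
    simp only [not_nonempty_iff] at h
    simp [Finset.univ_eq_empty] at hpsum
  set pX : X → ℝ := fun x => ∑ y', p x y' with hpXdef
  set pY : Y → ℝ := fun y => ∑ x', p x' y with hpYdef
  have hpX : ∀ x, 0 < pX x := fun x => Finset.sum_pos (fun y _ => hp x y) univ_nonempty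
  have hpY : ∀ y, 0 < pY y := fun y => Finset.sum_pos (fun x _ => hp x y) univ_nonempty
  have key : ∀ x y,
      (p x y * Real.log (q x y) - pX x * pY y * Real.log (q x y)
        - p x y * Real.log (p x y / (pX x * pY y)))
      - (pX x * pY y * Real.log (pX x * pY y / (pX x * q x y))
        - p x y * Real.log (p x y / (pX x * q x y)))
      = p x y * Real.log (pY y) - pX x * pY y * Real.log (pY y) := by
    intro x y
    have h1 : pX x * pY y / (pX x * q x y) = pY y / q x y :=
      mul_div_mul_left _ _ (ne_of_gt (hpX x))
    rw [h1,
      Real.log_div (ne_of_gt (hp x y)) (ne_of_gt (mul_pos (hpX x) (hpY y))),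
      Real.log_div (ne_of_gt (hpY y)) (ne_of_gt (hq x y)),
      Real.log_div (ne_of_gt (hp x y)) (ne_of_gt (mul_pos (hpX x) (hq x y))),
      Real.log_mul (ne_of_gt (hpX x)) (ne_of_gt (hpY y)),
      Real.log_mul (ne_of_gt (hpX x)) (ne_of_gt (hq x y))]
    ring
  have hsum1 : ∑ x, ∑ y, p x y * Real.log (pY y) = ∑ y, pY y * Real.log (pY y) := by
    rw [Finset.sum_comm]
    exact Finset.sum_congr rfl fun y _ => (Finset.sum_mul ..).symm
  have hsum2 : ∑ x, ∑ y, pX x * pY y * Real.log (pY y)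
      = ∑ y, pY y * Real.log (pY y) := by
    have hX1 : ∑ x, pX x = 1 := hpsum
    calc ∑ x, ∑ y, pX x * pY y * Real.log (pY y)
        = ∑ x, pX x * ∑ y, pY y * Real.log (pY y) := by
          refine Finset.sum_congr rfl fun x _ => ?_
          rw [Finset.mul_sum]; exact Finset.sum_congr rfl fun y _ => by ring
      _ = (∑ x, pX x) * ∑ y, pY y * Real.log (pY y) := (Finset.sum_mul ..).symm
      _ = ∑ y, pY y * Real.log (pY y) := by rw [hX1, one_mul]
  have main :
      ((∑ x, ∑ y, p x y * Real.log (q x y)) -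
        (∑ x, ∑ y, pX x * pY y * Real.log (q x y)) -
        (∑ x, ∑ y, p x y * Real.log (p x y / (pX x * pY y)))) -
      ((∑ x, ∑ y, pX x * pY y * Real.log (pX x * pY y / (pX x * q x y))) -
        (∑ x, ∑ y, p x y * Real.log (p x y / (pX x * q x y)))) = 0 := by
    simp only [← Finset.sum_sub_distrib]
    have := hsum1.trans hsum2.symm
    calc ∑ x, ∑ y, (p x y * Real.log (q x y) - pX x * pY y * Real.log (q x y)
          - p x y * Real.log (p x y / (pX x * pY y))
          - (pX x * pY y * Real.log (pX x * pY y / (pX x * q x y))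
            - p x y * Real.log (p x y / (pX x * q x y))))
        = ∑ x, ∑ y, (p x y * Real.log (pY y) - pX x * pY y * Real.log (pY y)) := by
          exact Finset.sum_congr rfl fun x _ => Finset.sum_congr rfl fun y _ => key x y
      _ = (∑ x, ∑ y, p x y * Real.log (pY y))
          - ∑ x, ∑ y, pX x * pY y * Real.log (pY y) := by
          rw [← Finset.sum_sub_distrib]
          exact Finset.sum_congr rfl fun x _ => Finset.sum_sub_distrib ..
      _ = 0 := by rw [hsum1, hsum2]; ring
  linarith [main]
end
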